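/- With the notation of the gradient integrals, let ∇_{p}A = -(α²/(1-α²)) ∫_{θ_min}^{θ_max}(q(θ) - p) dθ with Δθ > 0 and α ∈ (0,1). If the arc centroid C satisfies C ≠ p, then the unit vector u* = -∇_p A/‖∇_p A‖ equals (C - p)/‖C - p‖. That is, the area-minimizing pursuer heading points directly at the centroid of its boundary arc. -/

import Mathlib

/-- The unit vector at angle `θ` in the Euclidean plane. -/
noncomputable def unitVec (θ : ℝ) : EuclideanSpace ℝ (Fin 2) :=
  WithLp.toLp 2 ![Real.cos θ, Real.sin θ]

lemma unitVec_continuous : Continuous unitVec := by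
  unfold unitVec
  refine Continuous.comp (PiLp.continuous_toLp 2 fun _ : Fin 2 => ℝ)
    (continuous_pi fun i => ?_)
  fin_cases i
  · simpa using Real.continuous_cos
  · simpa using Real.continuous_sin

lemma neg_smul_aux (v g : EuclideanSpace ℝ (Fin 2)) (t : ℝ) (ht : 0 < t)
    (hv : v ≠ 0) (hg : g = -(t • v)) :
    -(‖g‖⁻¹ • g) = ‖v‖⁻¹ • v := by
  subst hg
  rw [norm_neg, norm_smul, Real.norm_eq_abs, abs_of_pos ht, smul_neg, neg_neg,
    mul_inv, smul_smul]
  congr 1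
  field_simp

theorem pursuer_optimal_heading_points_at_centroid
    (c p : EuclideanSpace ℝ (Fin 2)) (r : ℝ) (hr : 0 < r)
    (θmin θmax : ℝ) (h : θmin < θmax) (Δθ : ℝ) (hΔ : Δθ = θmax - θmin)
    (α : ℝ) (hα : α ∈ Set.Ioo (0 : ℝ) 1)
    (q : ℝ → EuclideanSpace ℝ (Fin 2)) (hq : ∀ θ, q θ = c + r • unitVec θ)
    (C : EuclideanSpace ℝ (Fin 2))
    (hC : C = Δθ⁻¹ • ∫ θ in θmin..θmax, q θ)
    (grad : EuclideanSpace ℝ (Fin 2))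
    (hgrad : grad = -((α ^ 2 / (1 - α ^ 2)) • ∫ θ in θmin..θmax, (q θ - p)))
    (hCp : C ≠ p) :
    -(‖grad‖⁻¹ • grad) = ‖C - p‖⁻¹ • (C - p) := by
  obtain ⟨hα0, hα1⟩ := hα
  have hΔpos : 0 < Δθ := by rw [hΔ]; linarith
  have hqcont : Continuous q := by
    have : q = fun θ => c + r • unitVec θ := funext hq
    rw [this]
    exact continuous_const.add (unitVec_continuous.const_smul r)
  have hint : IntervalIntegrable q MeasureTheory.volume θmin θmax :=
    hqcont.intervalIntegrable _ _
  have hI : (∫ θ in θmin..θmax, (q θ - p)) = Δθ • (C - p) := by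
    rw [intervalIntegral.integral_sub hint (intervalIntegrable_const),
      intervalIntegral.integral_const, hC, smul_sub, smul_smul,
      mul_inv_cancel₀ hΔpos.ne', one_smul, hΔ]
  have hk : 0 < α ^ 2 / (1 - α ^ 2) := by
    apply div_pos (pow_pos hα0 2); nlinarith
  apply neg_smul_aux (C - p) grad (α ^ 2 / (1 - α ^ 2) * Δθ)
    (mul_pos hk hΔpos) (sub_ne_zero.mpr hCp)
  rw [hgrad, hI, smul_smul]
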